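/- Let x* = (x*^{(1)},…,x*^{(n)}) be an extreme point of the feasible region P = {x : Σ_{i=1}^n A_i x^{(i)} = b_0 and x^{(i)} ∈ Q_i for all i} of the block-structured LP. Then the number of indices i ∈ {1,…,n} for which x*^{(i)} is not an extreme point of Q_i is at most r. In particular, if every Q_i is an integral polyhedron (all its extreme points are integer vectors), then all but at most r of the blocks x*^{(i)} are integer vectors. -/

import Mathlib

open Finset

/-- `Q` is a polyhedron: the solution set of finitely many linear inequalities. -/
def IsPolyhedron {t : ℕ} (Q : Set (Fin t → ℝ)) : Prop :=
  ∃ (m : ℕ) (D : Matrix (Fin m) (Fin t) ℝ) (p : Fin m → ℝ),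
    Q = {x | ∀ k, ∑ j, D k j * x j ≤ p k}

lemma IsPolyhedron.convex {t : ℕ} {Q : Set (Fin t → ℝ)} (h : IsPolyhedron Q) :
    Convex ℝ Q := by
  obtain ⟨m, D, p, rfl⟩ := h
  intro x hx y hy a b ha hb hab k
  have : ∑ j, D k j * (a • x + b • y) j
      = a * (∑ j, D k j * x j) + b * (∑ j, D k j * y j) := by
    rw [Finset.mul_sum, Finset.mul_sum, ← Finset.sum_add_distrib]
    refine Finset.sum_congr rfl fun j _ => ?_
    simp [Pi.add_apply, Pi.smul_apply, smul_eq_mul]; ring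
  rw [Set.mem_setOf_eq] at hx hy
  calc ∑ j, D k j * (a • x + b • y) j
      = a * (∑ j, D k j * x j) + b * (∑ j, D k j * y j) := this
    _ ≤ a * p k + b * p k :=
        add_le_add (mul_le_mul_of_nonneg_left (hx k) ha)
          (mul_le_mul_of_nonneg_left (hy k) hb)
    _ = p k := by rw [← add_mul, hab, one_mul]

/-- From a non-extreme point of a convex set, extract a symmetric direction. -/
lemma exists_sym_dir {E : Type*} [AddCommGroup E] [Module ℝ E]
    {Q : Set E} (hconv : Convex ℝ Q) {x : E} (hx : x ∈ Q)
    (hne : x ∉ Set.extremePoints ℝ Q) :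
    ∃ d : E, d ≠ 0 ∧ x + d ∈ Q ∧ x - d ∈ Q := by
  rw [mem_extremePoints] at hne
  push_neg at hne
  obtain ⟨x₁, hx₁, x₂, hx₂, hseg, hne'⟩ := hne hx
  obtain ⟨a, b, ha, hb, hab, hsum⟩ := hseg
  have hx12 : x₂ ≠ x₁ := by
    intro hEq
    have hx1x : x₁ = x := by
      rw [hEq, ← add_smul, hab, one_smul] at hsum
      exact hsum
    exact hne' hx1x (hEq.trans hx1x)
  set m := min a b with hm
  have hm0 : 0 < m := lt_min ha hb
  have hma : m ≤ a := min_le_left a b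
  have hmb : m ≤ b := min_le_right a b
  refine ⟨m • (x₂ - x₁), smul_ne_zero hm0.ne' (sub_ne_zero.mpr hx12), ?_, ?_⟩
  · have h1 : (a - m) • x₁ + (b + m) • x₂ = x + m • (x₂ - x₁) := by
      rw [← hsum]; module
    have := hconv hx₁ hx₂ (by linarith : (0:ℝ) ≤ a - m) (by linarith : (0:ℝ) ≤ b + m)
      (by linarith)
    rwa [h1] at this
  · have h1 : (a + m) • x₁ + (b - m) • x₂ = x - m • (x₂ - x₁) := by
      rw [← hsum]; module
    have := hconv hx₁ hx₂ (by linarith : (0:ℝ) ≤ a + m) (by linarith : (0:ℝ) ≤ b - m)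
      (by linarith)
    rwa [h1] at this

/-- Small perturbations along a symmetric direction stay inside a convex set. -/
lemma mem_of_small_perturb {E : Type*} [AddCommGroup E] [Module ℝ E]
    {Q : Set E} (hconv : Convex ℝ Q) {x d : E} (hx : x ∈ Q)
    (hp : x + d ∈ Q) (hmm : x - d ∈ Q) {c : ℝ} (hc : |c| ≤ 1) :
    x + c • d ∈ Q := by
  obtain ⟨hc1, hc2⟩ := abs_le.mp hc
  rcases le_or_gt 0 c with h | h
  · have := hconv hx hp (by linarith : (0:ℝ) ≤ 1 - c) h (by ring)
    have he : (1 - c) • x + c • (x + d) = x + c • d := by module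
    rwa [he] at this
  · have := hconv hx hmm (by linarith : (0:ℝ) ≤ 1 + c) (by linarith : (0:ℝ) ≤ -c)
      (by ring)
    have he : (1 + c) • x + (-c) • (x - d) = x + c • d := by module
    rwa [he] at this

/-- At an extreme point of the feasible region of the
block-structured LP, at most `r` blocks fail to be extreme points of their
respective `Q i`; in particular, if every `Q i` is integral, all but at most `r`
blocks are integer vectors. -/
theorem vertex_few_fractional_blocks
    (n r : ℕ) (hn : 1 ≤ n) (hr : 1 ≤ r)
    (t : Fin n → ℕ) (ht : ∀ i, 1 ≤ t i)
    (A : (i : Fin n) → Matrix (Fin r) (Fin (t i)) ℤ)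
    (b0 : Fin r → ℤ)
    (Q : (i : Fin n) → Set (Fin (t i) → ℝ))
    (hQpoly : ∀ i, IsPolyhedron (Q i))
    (hQnonneg : ∀ i, ∀ x ∈ Q i, ∀ j, 0 ≤ x j)
    (P : Set ((i : Fin n) → Fin (t i) → ℝ))
    (hP : P =
      {x | (∀ k, ∑ i, ∑ j, (A i k j : ℝ) * x i j = (b0 k : ℝ)) ∧ ∀ i, x i ∈ Q i})
    (xstar : (i : Fin n) → Fin (t i) → ℝ)
    (hvert : xstar ∈ Set.extremePoints ℝ P) :
    {i : Fin n | xstar i ∉ Set.extremePoints ℝ (Q i)}.ncard ≤ r ∧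
      ((∀ i, ∀ y ∈ Set.extremePoints ℝ (Q i), ∀ j, ∃ m : ℤ, y j = (m : ℝ)) →
        {i : Fin n | ¬ ∀ j, ∃ m : ℤ, xstar i j = (m : ℝ)}.ncard ≤ r) := by
  have hnonempty : Nonempty (Fin n) := Fin.pos_iff_nonempty.mp hn
  set S : Set (Fin n) := {i : Fin n | xstar i ∉ Set.extremePoints ℝ (Q i)} with hS
  have hxP : xstar ∈ P := hvert.1
  rw [hP] at hxP
  obtain ⟨hxeq, hxQ⟩ := hxP
  have main : S.ncard ≤ r := by
    by_contra hcon
    push_neg at hcon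
    -- choose symmetric directions
    have hch : ∀ i : Fin n, ∃ d : Fin (t i) → ℝ,
        (i ∈ S → d ≠ 0) ∧ xstar i + d ∈ Q i ∧ xstar i - d ∈ Q i := by
      intro i
      by_cases hi : i ∈ S
      · obtain ⟨d, hd0, hdp, hdm⟩ := exists_sym_dir (hQpoly i).convex (hxQ i) hi
        exact ⟨d, fun _ => hd0, hdp, hdm⟩
      · exact ⟨0, fun h => absurd h hi, by simpa using hxQ i, by simpa using hxQ i⟩
    choose d hd0 hdp hdm using hch
    -- the images under A
    set w : Fin n → (Fin r → ℝ) := fun i k => ∑ j, (A i k j : ℝ) * d i j with hw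
    set T : Finset (Fin n) := S.toFinite.toFinset with hT
    have hTcard : r < T.card := by
      rwa [Set.ncard_eq_toFinset_card S S.toFinite] at hcon
    have hmemT : ∀ i : Fin n, i ∈ T ↔ i ∈ S := fun i => Set.Finite.mem_toFinset _
    -- linear dependence
    have hnli : ¬ LinearIndependent ℝ (fun i : ↥T => w ↑i) := by
      intro hli
      have := hli.fintype_card_le_finrank
      rw [Fintype.card_coe, Module.finrank_fin_fun] at this
      omega
    obtain ⟨g, hgsum, i₀, hgi₀⟩ := Fintype.not_linearIndependent_iff.mp hnli
    classical
    set c : Fin n → ℝ := fun i => if h : i ∈ T then g ⟨i, h⟩ else 0 with hc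
    have hcw : ∑ i, c i • w i = 0 := by
      rw [← Finset.sum_subset (Finset.subset_univ T)
        (fun i _ hiT => by simp [hc, dif_neg hiT])]
      rw [← Finset.sum_attach T (fun i => c i • w i)]
      rw [← hgsum]
      exact Finset.sum_congr rfl fun i _ => by simp [hc, dif_pos i.2]
    -- the max of |c|
    set M : ℝ := Finset.univ.sup' Finset.univ_nonempty (fun i => |c i|) with hM
    have hMle : ∀ i, |c i| ≤ M := fun i => Finset.le_sup' (fun i => |c i|) (Finset.mem_univ i)
    have hci₀ : c ↑i₀ = g i₀ := by simp [hc, dif_pos i₀.2]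
    have hMpos : 0 < M :=
      lt_of_lt_of_le (by rw [hci₀]; exact abs_pos.mpr hgi₀) (hMle ↑i₀)
    set e : (i : Fin n) → Fin (t i) → ℝ := fun i => (c i / M) • d i with he
    have hcM : ∀ i, |c i / M| ≤ 1 := by
      intro i
      rw [abs_div, abs_of_pos hMpos, div_le_one hMpos]
      exact hMle i
    -- the perturbed points lie in P
    have hAe : ∀ k, ∑ i, ∑ j, (A i k j : ℝ) * e i j = 0 := by
      intro k
      have h1 : ∀ i, ∑ j, (A i k j : ℝ) * e i j = (c i • w i) k / M := by
        intro i
        simp only [he, Pi.smul_apply, smul_eq_mul, hw]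
        rw [Finset.mul_sum, eq_div_iff hMpos.ne', Finset.sum_mul]
        refine Finset.sum_congr rfl fun j _ => ?_
        field_simp
      calc ∑ i, ∑ j, (A i k j : ℝ) * e i j
          = ∑ i, (c i • w i) k / M := Finset.sum_congr rfl fun i _ => h1 i
        _ = (∑ i, c i • w i) k / M := by rw [← Finset.sum_div, Finset.sum_apply]
        _ = 0 := by rw [hcw]; simp
    have hmemP : ∀ s : ℝ, |s| ≤ 1 → (fun i => xstar i + (s * (c i / M)) • d i) ∈ P := by
      intro s hs
      rw [hP]
      constructor
      · intro k
        have hterm : ∀ i, ∑ j, (A i k j : ℝ) * (xstar i j + (s * (c i / M)) * d i j)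
            = (∑ j, (A i k j : ℝ) * xstar i j) + s * ∑ j, (A i k j : ℝ) * e i j := by
          intro i
          rw [Finset.mul_sum, ← Finset.sum_add_distrib]
          refine Finset.sum_congr rfl fun j _ => ?_
          simp only [he, Pi.smul_apply, smul_eq_mul]
          ring
        have hmain : ∑ i, ∑ j, (A i k j : ℝ) * (xstar i j + (s * (c i / M)) * d i j)
            = (b0 k : ℝ) := by
          rw [Finset.sum_congr rfl fun i _ => hterm i, Finset.sum_add_distrib,
            ← Finset.mul_sum, hAe k, mul_zero, add_zero]
          exact hxeq k
        simpa [Pi.add_apply, Pi.smul_apply, smul_eq_mul] using hmain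
      · intro i
        have habs : |s * (c i / M)| ≤ 1 := by
          rw [abs_mul]
          calc |s| * |c i / M| ≤ 1 * 1 := mul_le_mul hs (hcM i) (abs_nonneg _) zero_le_one
            _ = 1 := one_mul 1
        exact mem_of_small_perturb (hQpoly i).convex (hxQ i) (hdp i) (hdm i) habs
    have hy : (fun i => xstar i + ((1:ℝ) * (c i / M)) • d i) ∈ P := hmemP 1 (by norm_num)
    have hz : (fun i => xstar i + ((-1:ℝ) * (c i / M)) • d i) ∈ P := hmemP (-1) (by norm_num)
    -- xstar is the midpoint
    have hseg : xstar ∈ openSegment ℝ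
        (fun i => xstar i + ((1:ℝ) * (c i / M)) • d i)
        (fun i => xstar i + ((-1:ℝ) * (c i / M)) • d i) := by
      refine ⟨1/2, 1/2, by norm_num, by norm_num, by norm_num, ?_⟩
      funext i
      simp only [Pi.add_apply, Pi.smul_apply]
      module
    have heq := hvert.2 hy hz hseg
    have he0 : ((1:ℝ) * (c ↑i₀ / M)) • d ↑i₀ = 0 := by
      have := congrFun heq ↑i₀
      have : xstar ↑i₀ + ((1:ℝ) * (c ↑i₀ / M)) • d ↑i₀ = xstar ↑i₀ := this
      linear_combination (norm := module) this
    have hne0 : ((1:ℝ) * (c ↑i₀ / M)) • d ↑i₀ ≠ 0 := by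
      apply smul_ne_zero
      · rw [one_mul, hci₀]
        exact div_ne_zero hgi₀ hMpos.ne'
      · exact hd0 ↑i₀ ((hmemT ↑i₀).mp i₀.2)
    exact hne0 he0
  refine ⟨main, fun hint => ?_⟩
  refine le_trans (Set.ncard_le_ncard ?_ S.toFinite) main
  intro i hi
  simp only [Set.mem_setOf_eq] at hi ⊢
  intro hext
  exact hi (hint i _ hext)
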